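/- Let λ₃ < λ₁ < 0 < λ₂ < λ₄ be reals, let A₁, A₂, A₃, A₄ ∈ ℝ satisfy A₂ ≥ 0, A₃ ≤ 0, A₄ ≥ 0 (A₁ of arbitrary sign), and let b ∈ ℝ satisfy λ₁²A₁e^{λ₁b} + λ₂²A₂e^{λ₂b} + λ₃²A₃e^{λ₃b} + λ₄²A₄e^{λ₄b} = 0. Then for every x ≤ b: Σᵢ₌₁⁴ λᵢ²Aᵢe^{λᵢx} ≤ 0, and Σᵢ₌₁⁴ λᵢAᵢe^{λᵢx} ≥ Σᵢ₌₁⁴ λᵢAᵢe^{λᵢb}. -/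

import Mathlib

private lemma stmt18_aux (c l t : ℝ) :
    HasDerivAt (fun t => c * Real.exp (l * t)) (l * c * Real.exp (l * t)) t := by
  have h : HasDerivAt (fun t : ℝ => l * t) l t := by
    simpa using (hasDerivAt_id t).const_mul l
  simpa [mul_comm, mul_assoc, mul_left_comm] using h.exp.const_mul c

private lemma stmt18_key (l1 l2 l3 l4 A1 A2 A3 A4 b : ℝ)
    (h31 : l3 < l1) (h10 : l1 < 0) (h02 : (0:ℝ) < l2) (h24 : l2 < l4)
    (hA2 : 0 ≤ A2) (hA3 : A3 ≤ 0) (hA4 : 0 ≤ A4)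
    (hfit : l1 ^ 2 * A1 * Real.exp (l1 * b) + l2 ^ 2 * A2 * Real.exp (l2 * b) +
      l3 ^ 2 * A3 * Real.exp (l3 * b) + l4 ^ 2 * A4 * Real.exp (l4 * b) = 0)
    (x : ℝ) (hx : x ≤ b) :
    l1 ^ 2 * A1 * Real.exp (l1 * x) + l2 ^ 2 * A2 * Real.exp (l2 * x) +
        l3 ^ 2 * A3 * Real.exp (l3 * x) + l4 ^ 2 * A4 * Real.exp (l4 * x) ≤ 0 := by
  set E := Real.exp (l1 * (x - b)) with hE
  have e1 : Real.exp (l1 * x) = Real.exp (l1 * b) * E := by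
    rw [hE, ← Real.exp_add]; congr 1; ring
  have e2 : Real.exp (l2 * x) ≤ Real.exp (l2 * b) * E := by
    rw [hE, ← Real.exp_add]
    apply Real.exp_le_exp.mpr
    nlinarith [mul_nonneg (sub_nonneg.mpr hx) (by linarith : (0:ℝ) ≤ l2 - l1)]
  have e3 : Real.exp (l3 * b) * E ≤ Real.exp (l3 * x) := by
    rw [hE, ← Real.exp_add]
    apply Real.exp_le_exp.mpr
    nlinarith [mul_nonneg (sub_nonneg.mpr hx) (by linarith : (0:ℝ) ≤ l1 - l3)]
  have e4 : Real.exp (l4 * x) ≤ Real.exp (l4 * b) * E := by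
    rw [hE, ← Real.exp_add]
    apply Real.exp_le_exp.mpr
    nlinarith [mul_nonneg (sub_nonneg.mpr hx) (by linarith : (0:ℝ) ≤ l4 - l1)]
  have t1 : l1 ^ 2 * A1 * Real.exp (l1 * x) = l1 ^ 2 * A1 * Real.exp (l1 * b) * E := by
    rw [e1]; ring
  have c2 : (0:ℝ) ≤ l2 ^ 2 * A2 := mul_nonneg (sq_nonneg l2) hA2
  have c4 : (0:ℝ) ≤ l4 ^ 2 * A4 := mul_nonneg (sq_nonneg l4) hA4
  have c3 : l3 ^ 2 * A3 ≤ 0 := mul_nonpos_of_nonneg_of_nonpos (sq_nonneg l3) hA3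
  have t2 := mul_le_mul_of_nonneg_left e2 c2
  have t4 := mul_le_mul_of_nonneg_left e4 c4
  have t3 := mul_le_mul_of_nonpos_left e3 c3
  have hmul : (l1 ^ 2 * A1 * Real.exp (l1 * b) + l2 ^ 2 * A2 * Real.exp (l2 * b) +
      l3 ^ 2 * A3 * Real.exp (l3 * b) + l4 ^ 2 * A4 * Real.exp (l4 * b)) * E = 0 := by
    rw [hfit, zero_mul]
  nlinarith [t1, t2, t3, t4, hmul]

/-- The variational inequality in the waiting region: if the second-order
smooth-fit condition `Σᵢ λᵢ²Aᵢe^{λᵢb} = 0` holds with `A₂, A₄ ≥ 0`, `A₃ ≤ 0`,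
then for every `x ≤ b` one has `Σᵢ λᵢ²Aᵢe^{λᵢx} ≤ 0` and
`Σᵢ λᵢAᵢe^{λᵢx} ≥ Σᵢ λᵢAᵢe^{λᵢb}`. -/
theorem stmt18 (l1 l2 l3 l4 A1 A2 A3 A4 b : ℝ)
    (h31 : l3 < l1) (h10 : l1 < 0) (h02 : (0:ℝ) < l2) (h24 : l2 < l4)
    (hA2 : 0 ≤ A2) (hA3 : A3 ≤ 0) (hA4 : 0 ≤ A4)
    (hfit : l1 ^ 2 * A1 * Real.exp (l1 * b) + l2 ^ 2 * A2 * Real.exp (l2 * b) +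
      l3 ^ 2 * A3 * Real.exp (l3 * b) + l4 ^ 2 * A4 * Real.exp (l4 * b) = 0) :
    ∀ x : ℝ, x ≤ b →
      (l1 ^ 2 * A1 * Real.exp (l1 * x) + l2 ^ 2 * A2 * Real.exp (l2 * x) +
        l3 ^ 2 * A3 * Real.exp (l3 * x) + l4 ^ 2 * A4 * Real.exp (l4 * x) ≤ 0) ∧
      (l1 * A1 * Real.exp (l1 * b) + l2 * A2 * Real.exp (l2 * b) +
          l3 * A3 * Real.exp (l3 * b) + l4 * A4 * Real.exp (l4 * b) ≤
        l1 * A1 * Real.exp (l1 * x) + l2 * A2 * Real.exp (l2 * x) +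
          l3 * A3 * Real.exp (l3 * x) + l4 * A4 * Real.exp (l4 * x)) := by
  have key := stmt18_key l1 l2 l3 l4 A1 A2 A3 A4 b h31 h10 h02 h24 hA2 hA3 hA4 hfit
  have hg : ∀ t : ℝ, HasDerivAt
      (fun t => l1 * A1 * Real.exp (l1 * t) + l2 * A2 * Real.exp (l2 * t) +
        l3 * A3 * Real.exp (l3 * t) + l4 * A4 * Real.exp (l4 * t))
      (l1 ^ 2 * A1 * Real.exp (l1 * t) + l2 ^ 2 * A2 * Real.exp (l2 * t) +
        l3 ^ 2 * A3 * Real.exp (l3 * t) + l4 ^ 2 * A4 * Real.exp (l4 * t)) t := by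
    intro t
    have h := (((stmt18_aux (l1 * A1) l1 t).add (stmt18_aux (l2 * A2) l2 t)).add
      (stmt18_aux (l3 * A3) l3 t)).add (stmt18_aux (l4 * A4) l4 t)
    refine h.congr_deriv ?_
    ring
  have hanti : AntitoneOn
      (fun t => l1 * A1 * Real.exp (l1 * t) + l2 * A2 * Real.exp (l2 * t) +
        l3 * A3 * Real.exp (l3 * t) + l4 * A4 * Real.exp (l4 * t)) (Set.Iic b) := by
    apply antitoneOn_of_deriv_nonpos (convex_Iic b)
    · exact Continuous.continuousOn (by continuity)
    · intro t ht
      exact (hg t).differentiableAt.differentiableWithinAt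
    · intro t ht
      rw [interior_Iic] at ht
      rw [(hg t).deriv]
      exact key t ht.le
  intro x hx
  exact ⟨key x hx, hanti (Set.mem_Iic.mpr hx) (Set.mem_Iic.mpr le_rfl) hx⟩
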